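/- Let R be a Noetherian domain whose integral closure R' in its fraction field K is a finite R-module, and assume that for every height-1 prime P' of R', the contraction P' ∩ R has height 1 in R. Then the hull ⋂_p R_p ⊆ K (intersection over all height-1 primes p of R) is a finite R-module. -/

import Mathlib

universe u
set_option synthInstance.maxHeartbeats 1000000
set_option maxHeartbeats 1000000

open IsLocalRing


lemma aux_maximalIdeal_principal {A : Type*} [CommRing A] [IsDomain A] [IsNoetherianRing A]
    [IsLocalRing A] [IsIntegrallyClosed A] {b c : A} (hc : c ∉ Ideal.span {b})
    (hm : ∀ z, z ∈ maximalIdeal A ↔ z * c ∈ Ideal.span {b}) :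
    ∃ t, maximalIdeal A = Ideal.span {t} := by
  have hc0 : c ≠ 0 := fun h => hc (h ▸ (Ideal.span {b}).zero_mem)
  by_cases hb : b = 0
  · refine ⟨0, ?_⟩
    rw [Ideal.span_singleton_eq_bot.mpr rfl, eq_bot_iff]
    intro z hz
    have := (hm z).mp hz
    rw [hb, Ideal.span_singleton_eq_bot.mpr rfl, Ideal.mem_bot] at this
    rcases mul_eq_zero.mp this with h | h
    · exact Ideal.mem_bot.mpr h
    · exact absurd h hc0
  by_cases hcase : ∀ z ∈ maximalIdeal A, ∃ w ∈ maximalIdeal A, z * c = b * w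
  · exfalso
    set F := FractionRing A
    have hbF : algebraMap A F b ≠ 0 := fun h => hb (IsFractionRing.injective A F (by simpa using h))
    set x : F := algebraMap A F c / algebraMap A F b with hx
    set N : Submodule A F := Submodule.map (Algebra.linearMap A F) (maximalIdeal A) with hN
    have hint : IsIntegral A x := by
      refine isIntegral_of_smul_mem_submodule N ?_ ?_ x ?_
      · intro h
        have hbN : algebraMap A F b ∈ N := ⟨b, (hm b).mpr (Ideal.mem_span_singleton'.mpr ⟨c, mul_comm c b⟩), rfl⟩
        rw [h] at hbN
        exact hbF (by simpa using hbN)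
      · exact Submodule.FG.map _ (IsNoetherian.noetherian _)
      · rintro n ⟨z, hz, rfl⟩
        obtain ⟨w, hw, hzw⟩ := hcase z hz
        refine ⟨w, hw, ?_⟩
        have : (algebraMap A F) z * (algebraMap A F) c = (algebraMap A F) b * (algebraMap A F) w := by
          rw [← map_mul, ← map_mul, hzw]
        simp only [Algebra.linearMap_apply, smul_eq_mul, hx]
        rw [div_mul_eq_mul_div, eq_div_iff hbF]
        linear_combination -this
    obtain ⟨u, hu⟩ := IsIntegrallyClosed.isIntegral_iff.mp hint
    apply hc
    refine Ideal.mem_span_singleton'.mpr ⟨u, ?_⟩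
    apply IsFractionRing.injective A F
    rw [map_mul, hu, hx]
    exact div_mul_cancel₀ _ hbF
  · push_neg at hcase
    obtain ⟨z, hz, hzc⟩ := hcase
    obtain ⟨w₀, hw₀⟩ := Ideal.mem_span_singleton'.mp ((hm z).mp hz)
    have hw₀m : w₀ ∉ maximalIdeal A := fun h => hzc w₀ h (by rw [← hw₀]; ring)
    have hwu : IsUnit w₀ := by
      by_contra h
      exact hw₀m ((IsLocalRing.mem_maximalIdeal _).mpr (mem_nonunits_iff.mpr h))
    obtain ⟨u, hu⟩ := isUnit_iff_exists_inv.mp hwu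
    refine ⟨z * u, ?_⟩
    have htc : (z * u) * c = b := by linear_combination (-u) * hw₀ + b * hu
    apply le_antisymm
    · intro y hy
      obtain ⟨v, hv⟩ := Ideal.mem_span_singleton'.mp ((hm y).mp hy)
      refine Ideal.mem_span_singleton'.mpr ⟨v, ?_⟩
      have : (v * (z * u) - y) * c = 0 := by
        rw [sub_mul, mul_assoc, htc, hv]; ring
      have := (mul_eq_zero.mp this).resolve_right hc0
      linear_combination this
    · rw [Ideal.span_le, Set.singleton_subset_iff]
      exact Ideal.mul_mem_right u _ hz

lemma aux_prime_lt_eq_bot {A : Type*} [CommRing A] [IsDomain A] [IsNoetherianRing A]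
    [IsLocalRing A] [IsIntegrallyClosed A] {b c : A} (hc : c ∉ Ideal.span {b})
    (hm : ∀ z, z ∈ maximalIdeal A ↔ z * c ∈ Ideal.span {b})
    (q : Ideal A) (hq : q.IsPrime) (hlt : q < maximalIdeal A) : q = ⊥ := by
  obtain ⟨t, ht⟩ := aux_maximalIdeal_principal hc hm
  have htq : t ∉ q := by
    intro h
    exact absurd (ht ▸ (Ideal.span_singleton_le_iff_mem q).mpr h) (not_le_of_gt hlt)
  have hpow : ∀ n : ℕ, q ≤ Ideal.span {t} ^ n := by
    intro n
    induction n with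
    | zero => simp
    | succ n ih =>
      intro y hy
      obtain ⟨v, hv⟩ := Ideal.mem_span_singleton'.mp (ht ▸ hlt.le hy)
      have hvq : v ∈ q := by
        refine (hq.mem_or_mem (show v * t ∈ q by rwa [hv])).resolve_right htq
      rw [pow_succ, ← hv]
      exact Ideal.mul_mem_mul (ih hvq) (Ideal.mem_span_singleton_self t)
  have hne : Ideal.span {t} ≠ ⊤ := by
    intro h
    exact (IsLocalRing.maximalIdeal.isMaximal A).ne_top (by rw [ht, h])
  rw [eq_bot_iff, ← Ideal.iInf_pow_eq_bot_of_isDomain (Ideal.span {t}) hne]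
  exact le_iInf hpow

lemma aux_no_chain {A : Type*} [CommRing A] [IsDomain A] [IsNoetherianRing A]
    [IsIntegrallyClosed A] {b c : A} (hc : c ∉ Ideal.span {b})
    {P : Ideal A} (hP : P.IsPrime)
    (hmem : ∀ z, z ∈ P ↔ z * c ∈ Ideal.span {b})
    (q₀ q₁ : Ideal A) (hq₁ : q₁.IsPrime) (h01 : q₀ < q₁) (h1P : q₁ < P) : False := by
  haveI := hP
  set L := Localization.AtPrime P
  haveI : IsNoetherianRing L := IsLocalization.isNoetherianRing P.primeCompl L inferInstance
  haveI : IsIntegrallyClosed L :=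
    isIntegrallyClosed_of_isLocalization L P.primeCompl P.primeCompl_le_nonZeroDivisors
  set φ := algebraMap A L with hφ
  have hinj : Function.Injective φ := IsLocalization.injective L P.primeCompl_le_nonZeroDivisors
  have hc' : φ c ∉ Ideal.span {φ b} := by
    intro h
    obtain ⟨y, hy⟩ := Ideal.mem_span_singleton'.mp h
    obtain ⟨⟨w, t⟩, hyt⟩ := IsLocalization.surj P.primeCompl y
    have heq : (t : A) * c = w * b := by
      apply hinj
      simp only [map_mul]
      linear_combination (φ b) * hyt - (φ t) * hy
    have : (t : A) ∈ P := (hmem t).mpr (Ideal.mem_span_singleton'.mpr ⟨w, heq.symm⟩)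
    exact t.2 this
  have hm' : ∀ z : L, z ∈ IsLocalRing.maximalIdeal L ↔ z * φ c ∈ Ideal.span {φ b} := by
    intro z
    obtain ⟨⟨r, s⟩, hzs⟩ := IsLocalization.surj P.primeCompl z
    obtain ⟨v, hv⟩ := isUnit_iff_exists_inv.mp (IsLocalization.map_units L s)
    constructor
    · intro hzm
      have hrm : φ r ∈ IsLocalRing.maximalIdeal L := by
        rw [← hzs]; exact Ideal.mul_mem_right _ _ hzm
      have hr : r ∈ P := (IsLocalization.AtPrime.to_map_mem_maximal_iff L P r).mp hrm
      obtain ⟨w, hw⟩ := Ideal.mem_span_singleton'.mp ((hmem r).mp hr)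
      refine Ideal.mem_span_singleton'.mpr ⟨φ w * v, ?_⟩
      have hw' : φ w * φ b = φ r * φ c := by rw [← map_mul, ← map_mul, hw]
      linear_combination (-(v * φ c)) * hzs + v * hw' + (z * φ c) * hv
    · intro hzc
      obtain ⟨y, hy⟩ := Ideal.mem_span_singleton'.mp hzc
      obtain ⟨⟨w, t⟩, hyt⟩ := IsLocalization.surj P.primeCompl y
      have heq : r * (t : A) * c = w * (s : A) * b := by
        apply hinj
        simp only [map_mul]
        linear_combination (-(φ t * φ c)) * hzs + (-(φ s * φ t)) * hy + (φ s * φ b) * hyt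
      have hrt : r * (t : A) ∈ P := (hmem _).mpr (Ideal.mem_span_singleton'.mpr ⟨w * s, heq.symm⟩)
      have hr : r ∈ P := (hP.mem_or_mem hrt).resolve_right t.2
      have hz2 : z = φ r * v := by linear_combination v * hzs - z * hv
      rw [hz2]
      exact Ideal.mul_mem_right _ _
        ((IsLocalization.AtPrime.to_map_mem_maximal_iff L P r).mpr hr)
  have hdisj : Disjoint ((P.primeCompl : Submonoid A) : Set A) (q₁ : Set A) :=
    Set.disjoint_left.mpr fun x hx hx' => hx (h1P.le hx')
  have hQprime : (Ideal.map φ q₁).IsPrime :=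
    IsLocalization.isPrime_of_isPrime_disjoint P.primeCompl L q₁ hq₁ hdisj
  have hcomap : Ideal.comap φ (Ideal.map φ q₁) = q₁ :=
    IsLocalization.under_map_of_isPrime_disjoint P.primeCompl L hq₁ hdisj
  have hQlt : Ideal.map φ q₁ < IsLocalRing.maximalIdeal L := by
    refine lt_of_le_of_ne ?_ ?_
    · rw [← Localization.AtPrime.map_eq_maximalIdeal]
      exact Ideal.map_mono h1P.le
    · intro h
      have := congrArg (Ideal.comap φ) h
      rw [hcomap] at this
      exact h1P.ne (this.trans (IsLocalization.AtPrime.comap_maximalIdeal (S := L) (I := P)))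
  have hQbot : Ideal.map φ q₁ = ⊥ := aux_prime_lt_eq_bot hc' hm' _ hQprime hQlt
  have : q₁ = ⊥ := by
    rw [← hcomap, hQbot, eq_bot_iff]
    intro x hx
    have hx0 : φ x = 0 := Ideal.mem_bot.mp hx
    exact Ideal.mem_bot.mpr (hinj (by simpa using hx0))
  exact absurd (this ▸ h01) (by simp)

lemma aux_height_eq_one {A : Type*} [CommRing A] [IsDomain A] [IsNoetherianRing A]
    [IsIntegrallyClosed A] {b c : A} (hb : b ≠ 0) (hc : c ∉ Ideal.span {b})
    {P : Ideal A} (hP : P.IsPrime)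
    (hmem : ∀ z, z ∈ P ↔ z * c ∈ Ideal.span {b}) :
    Order.height (⟨P, hP⟩ : PrimeSpectrum A) = 1 := by
  have hPne : P ≠ ⊥ := by
    intro h
    have : b ∈ P := (hmem b).mpr (Ideal.mem_span_singleton'.mpr ⟨c, mul_comm c b⟩)
    rw [h, Ideal.mem_bot] at this
    exact hb this
  have hle : Order.height (⟨P, hP⟩ : PrimeSpectrum A) ≤ 1 := by
    apply Order.height_le
    intro p hlast
    by_contra hlen
    push_neg at hlen
    have h2 : 2 ≤ p.length := by
      rcases Nat.lt_or_ge p.length 2 with h | h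
      · interval_cases h' : p.length <;> simp_all <;> omega
      · exact h
    have hi21 : (⟨p.length - 2, by omega⟩ : Fin (p.length + 1)) < ⟨p.length - 1, by omega⟩ := by
      simp only [Fin.mk_lt_mk]; omega
    have hi1l : (⟨p.length - 1, by omega⟩ : Fin (p.length + 1)) < Fin.last p.length := by
      simp only [Fin.lt_def, Fin.val_last]; omega
    have h01 : p.toFun ⟨p.length - 2, by omega⟩ < p.toFun ⟨p.length - 1, by omega⟩ :=
      p.strictMono hi21
    have h1P : p.toFun ⟨p.length - 1, by omega⟩ < (⟨P, hP⟩ : PrimeSpectrum A) := by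
      rw [← hlast]
      exact p.strictMono hi1l
    exact aux_no_chain hc hP hmem (p.toFun ⟨p.length - 2, by omega⟩).asIdeal
      (p.toFun ⟨p.length - 1, by omega⟩).asIdeal (p.toFun ⟨p.length - 1, by omega⟩).isPrime
      h01 h1P
  have hge : Order.height (⟨P, hP⟩ : PrimeSpectrum A) ≠ 0 := by
    intro h0
    have hmin := Order.height_eq_zero.mp h0
    have hbot : (⟨⊥, Ideal.bot_prime⟩ : PrimeSpectrum A) ≤ ⟨P, hP⟩ :=
      (PrimeSpectrum.asIdeal_le_asIdeal _ _).mp bot_le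
    have := hmin hbot
    exact hPne (le_bot_iff.mp ((PrimeSpectrum.asIdeal_le_asIdeal _ _).mpr this))
  exact le_antisymm hle (ENat.one_le_iff_ne_zero.mpr hge)

/-- The hull of a Noetherian domain `R`: the intersection `⋂_p R_p ⊆ K` over all height-1
primes `p` of `R`, inside the fraction field `K` (equal to `K` if there are no height-1
primes). -/
noncomputable def domainHull (R : Type u) [CommRing R] [IsDomain R] :
    Submodule R (FractionRing R) :=
  ⨅ (p : PrimeSpectrum R) (_ : Order.height p = 1),
    Subalgebra.toSubmodule (Localization.subalgebra (FractionRing R) p.asIdeal.primeCompl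
      p.asIdeal.primeCompl_le_nonZeroDivisors)

/-- Let `R` be a Noetherian domain whose integral closure `R'` in its fraction field `K` is a
finite `R`-module, and assume that for every height-1 prime `P'` of `R'` the contraction
`P' ∩ R` has height 1 in `R`.  Then the hull `⋂_p R_p ⊆ K` (intersection over all height-1
primes of `R`) is a finite `R`-module. -/
theorem domain_hull_finite_of_finite_integral_closure
    (R : Type u) [CommRing R] [IsDomain R] [IsNoetherianRing R]
    (hfin : Module.Finite R (integralClosure R (FractionRing R)))
    (hht : ∀ P' : PrimeSpectrum (integralClosure R (FractionRing R)),
      Order.height P' = 1 →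
        Order.height
          (PrimeSpectrum.comap (algebraMap R (integralClosure R (FractionRing R))) P') = 1) :
    Module.Finite R (domainHull R) := by
  classical
  set K := FractionRing R with hK
  set A := integralClosure R K with hA
  haveI hfin' : Module.Finite R ↥A := hfin
  haveI : IsNoetherianRing ↥A := Algebra.FiniteType.isNoetherianRing R ↥A
  haveI : IsIntegrallyClosed ↥A := integralClosure.isIntegrallyClosedOfFiniteExtension K
  have key : domainHull R ≤ Subalgebra.toSubmodule A := by
    intro x hx
    rw [Subalgebra.mem_toSubmodule]
    by_contra hxA
    obtain ⟨⟨a, b⟩, hab⟩ := IsLocalization.surj (nonZeroDivisors R) x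
    simp only at hab
    have hb0 : (b : R) ≠ 0 := nonZeroDivisors.coe_ne_zero b
    have hbK : algebraMap R K (b : R) ≠ 0 := fun h =>
      hb0 (IsFractionRing.injective R K (by simpa using h))
    set aA := algebraMap R ↥A a with haA
    set bA := algebraMap R ↥A (b : R) with hbA
    have hcoe : ∀ r : R, ((algebraMap R ↥A r : ↥A) : K) = algebraMap R K r := fun r => rfl
    have hbA0 : bA ≠ 0 := by
      intro h
      apply hbK
      have h2 : ((bA : ↥A) : K) = 0 := by rw [h]; simp
      rwa [hbA, hcoe] at h2
    have haAspan : aA ∉ Ideal.span {bA} := by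
      intro h
      obtain ⟨w, hw⟩ := Ideal.mem_span_singleton'.mp h
      apply hxA
      have hwK : (w : K) * algebraMap R K (b : R) = algebraMap R K a := by
        have := congrArg (fun z : ↥A => (z : K)) hw
        simpa [haA, hbA, hcoe] using this
      have hxw : x = (w : K) := by
        have hx' : x * algebraMap R K (b : R) = algebraMap R K a := hab
        rw [← hx'] at hwK
        exact (mul_right_cancel₀ hbK hwK).symm
      rw [hxw]
      exact w.2
    set J : Ideal ↥A := (Ideal.span {bA}).colon (Ideal.span {aA}) with hJ
    have hJ1 : (Ideal.Quotient.mk J) 1 ≠ 0 := by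
      intro h
      rw [Ideal.Quotient.eq_zero_iff_mem, hJ, Ideal.mem_colon_span_singleton, one_mul] at h
      exact haAspan h
    obtain ⟨P, hPass, hJP⟩ :=
      exists_le_isAssociatedPrime_of_isNoetherianRing ↥A ((Ideal.Quotient.mk J) 1) hJ1
    obtain ⟨hPprime, d', hann⟩ := isAssociatedPrime_iff.mp hPass
    obtain ⟨d, rfl⟩ := Ideal.Quotient.mk_surjective d'
    set c := d * aA with hc
    have hmem : ∀ z : ↥A, z ∈ P ↔ z * c ∈ Ideal.span {bA} := by
      intro z
      rw [hann, Submodule.mem_colon_singleton, Submodule.mem_bot]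
      have : z • (Ideal.Quotient.mk J) d = (Ideal.Quotient.mk J) (z * d) := rfl
      rw [this, Ideal.Quotient.eq_zero_iff_mem, hJ, Ideal.mem_colon_span_singleton, hc]
      rw [mul_assoc]
    have hcspan : c ∉ Ideal.span {bA} := by
      intro h
      exact hPprime.ne_top (Ideal.eq_top_iff_one P |>.mpr ((hmem 1).mpr (by rwa [one_mul])))
    have hh1 : Order.height (⟨P, hPprime⟩ : PrimeSpectrum ↥A) = 1 :=
      aux_height_eq_one hbA0 hcspan hPprime hmem
    have hh2 := hht ⟨P, hPprime⟩ hh1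
    set p := PrimeSpectrum.comap (algebraMap R ↥A) (⟨P, hPprime⟩ : PrimeSpectrum ↥A) with hp
    have hxp : x ∈ Subalgebra.toSubmodule (Localization.subalgebra K p.asIdeal.primeCompl
        p.asIdeal.primeCompl_le_nonZeroDivisors) := by
      have hx' := hx
      rw [domainHull, Submodule.mem_iInf] at hx'
      have := hx' p
      rw [Submodule.mem_iInf] at this
      exact this hh2
    rw [Subalgebra.mem_toSubmodule] at hxp
    obtain ⟨⟨r, s⟩, hrs⟩ := IsLocalization.surj p.asIdeal.primeCompl
      (⟨x, hxp⟩ : ↥(Localization.subalgebra K p.asIdeal.primeCompl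
        p.asIdeal.primeCompl_le_nonZeroDivisors))
    have hxs : x * algebraMap R K (s : R) = algebraMap R K r := by
      have := congrArg (fun z : ↥(Localization.subalgebra K p.asIdeal.primeCompl
        p.asIdeal.primeCompl_le_nonZeroDivisors) => (z : K)) hrs
      simpa using this
    have hsa : (s : R) * a = r * (b : R) := by
      apply IsFractionRing.injective R K
      rw [map_mul, map_mul]
      linear_combination (-(algebraMap R K (s : R))) * hab + (algebraMap R K (b : R)) * hxs
    have hsA : algebraMap R ↥A (s : R) * aA = algebraMap R ↥A r * bA := by
      rw [haA, hbA, ← map_mul, ← map_mul, hsa]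
    have hsP : algebraMap R ↥A (s : R) ∈ P := by
      rw [hmem, hc]
      refine Ideal.mem_span_singleton'.mpr ⟨d * algebraMap R ↥A r, ?_⟩
      linear_combination (-d) * hsA
    have hsnot : (s : R) ∉ p.asIdeal := s.2
    exact hsnot hsP
  haveI : IsNoetherian R ↥(Subalgebra.toSubmodule A) :=
    isNoetherian_of_fg_of_noetherian _ (Module.Finite.iff_fg.mp hfin)
  rw [Module.Finite.iff_fg]
  have hfg := IsNoetherian.noetherian
    (Submodule.comap (Subalgebra.toSubmodule A).subtype (domainHull R))
  have hmap := Submodule.FG.map (Subalgebra.toSubmodule A).subtype hfg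
  rwa [Submodule.map_comap_subtype, inf_eq_right.mpr key] at hmap
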